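/- Let (w_k) be a sequence of nonnegative sequences ℕ → ℝ that is Cauchy with respect to the seminorm ‖·‖₁, i.e. lim_k sup_{l≥k} ‖w_l − w_k‖₁ = 0. Then there exists a nonnegative sequence w : ℕ → ℝ with lim_k ‖w_k − w‖₁ = 0; and if moreover sup_k sup_n w_k(n) < ∞, then w can be chosen with sup_n w(n) ≤ sup_k sup_n w_k(n). -/

import Mathlib

open MeasureTheory Filter Topology
open scoped BigOperators

noncomputable section

open Classical in
/-- `S(N) = S ∩ {1,…,N}` as a `Finset`. -/
def initSeg (S : Set ℕ) (N : ℕ) : Finset ℕ := (Finset.Icc 1 N).filter (· ∈ S)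

/-- The average `(1/#S(N)) ∑_{s ∈ S(N)} f (sα mod 1)`. -/
def empAvg (S : Set ℕ) (α : ℝ) (N : ℕ) (f : UnitAddCircle → ℝ) : ℝ :=
  ((initSeg S N).card : ℝ)⁻¹ * ∑ s ∈ initSeg S N, f (((s : ℝ) * α : ℝ) : UnitAddCircle)

/-- `μ` is the weak limit of the empirical measures `(1/#S(N)) ∑_{s ∈ S(N)} δ_{sα mod 1}`. -/
def IsLimitMeasure (S : Set ℕ) (α : ℝ) (μ : Measure UnitAddCircle) : Prop :=
  ∀ f : C(UnitAddCircle, ℝ),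
    Tendsto (fun N => empAvg S α N (fun x => f x)) atTop (𝓝 (∫ x, f x ∂μ))

/-- A good set: infinite, and for every `α` the empirical measures converge weakly
to some (probability) limit measure `μ_{S,α}`. -/
def IsGoodSet (S : Set ℕ) : Prop :=
  S.Infinite ∧ ∀ α : ℝ, ∃ μ : Measure UnitAddCircle, IsProbabilityMeasure μ ∧ IsLimitMeasure S α μ

/-- `R` is sublacunary: `log N / #R(N) → 0`. -/
def Sublacunary (R : Set ℕ) : Prop :=
  Tendsto (fun N : ℕ => Real.log N / ((initSeg R N).card : ℝ)) atTop (𝓝 0)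

open Classical in
/-- `#{n < N : r_n ∈ S}` where `(r_n)` is the increasing (0-indexed) enumeration of `R`. -/
def relCount (R S : Set ℕ) (N : ℕ) : ℕ :=
  ((Finset.range N).filter (fun n => Nat.nth (· ∈ R) n ∈ S)).card

/-- Weighted average `(1/∑_{n<N} w n) ∑_{n<N} w n · f (r_n β mod 1)`. -/
def wAvg (R : Set ℕ) (w : ℕ → ℝ) (β : ℝ) (N : ℕ) (f : UnitAddCircle → ℝ) : ℝ :=
  (∑ n ∈ Finset.range N, w n)⁻¹ *
    ∑ n ∈ Finset.range N, w n * f (((Nat.nth (· ∈ R) n : ℝ) * β : ℝ) : UnitAddCircle)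

/-- `μ` is the weak limit of the `w`-weighted empirical measures along `R` at `β`. -/
def IsWeightLimit (R : Set ℕ) (w : ℕ → ℝ) (β : ℝ) (μ : Measure UnitAddCircle) : Prop :=
  ∀ f : C(UnitAddCircle, ℝ),
    Tendsto (fun N => wAvg R w β N (fun x => f x)) atTop (𝓝 (∫ x, f x ∂μ))

/-- A good weight on `R` (indexed by the increasing enumeration of `R`). -/
def IsGoodWeight (R : Set ℕ) (w : ℕ → ℝ) : Prop :=
  (∀ n, 0 ≤ w n) ∧ ¬ Summable w ∧
    ∀ β : ℝ, ∃ μ : Measure UnitAddCircle, IsProbabilityMeasure μ ∧ IsWeightLimit R w β μ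

/-- Besicovitch-type seminorm `‖f‖₁ = limsup_N (1/N) ∑_{n<N} |f n|`. -/
def besic (f : ℕ → ℝ) : ℝ := Filter.limsup (fun N => (∑ n ∈ Finset.range N, |f n|) / N) atTop

/-- An integrable weight: approximable in `‖·‖₁` by bounded good weights. -/
def IntegrableWeight (R : Set ℕ) (w : ℕ → ℝ) : Prop :=
  ∀ ε > 0, ∃ v : ℕ → ℝ, IsGoodWeight R v ∧ (∃ C, ∀ n, v n ≤ C) ∧
    besic (fun n => v n - w n) < ε

/-- Total variation distance between two finite Borel measures on the torus. -/
def varDist (μ ν : Measure UnitAddCircle) : ℝ :=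
  ⨆ B : Set UnitAddCircle, ⨆ _ : MeasurableSet B, |(μ B).toReal - (ν B).toReal|

/-- `e(θ) = exp(2πiθ)`. -/
def eC (θ : ℝ) : ℂ := Complex.exp (2 * Real.pi * Complex.I * θ)

/-- `w(R(N)) = ∑_{r ∈ R(N)} w r`. -/
def wSum (R : Set ℕ) (w : ℕ → ℝ) (N : ℕ) : ℝ := ∑ r ∈ initSeg R N, w r

/-- `μ` is the weak limit of `(1/w(R(N))) ∑_{r ∈ R(N)} w r · δ_{rβ mod 1}`. -/
def IsWeightLimitR (R : Set ℕ) (w : ℕ → ℝ) (β : ℝ) (μ : Measure UnitAddCircle) : Prop :=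
  ∀ f : C(UnitAddCircle, ℝ),
    Tendsto
      (fun N => (wSum R w N)⁻¹ * ∑ r ∈ initSeg R N, w r * f (((r : ℝ) * β : ℝ) : UnitAddCircle))
      atTop (𝓝 (∫ x, f x ∂μ))

/-- `f : ℕ → ℂ` has mean `c`. -/
def HasMean (f : ℕ → ℂ) (c : ℂ) : Prop :=
  Tendsto (fun N => (∑ n ∈ Finset.range N, f n) / (N : ℂ)) atTop (𝓝 c)

/-- The seminorm `‖f‖_M = limsup_N |(1/N) ∑_{n<N} f n|`. -/
def meanSeminorm (f : ℕ → ℂ) : ℝ :=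
  Filter.limsup (fun N => ‖(∑ n ∈ Finset.range N, f n) / (N : ℂ)‖) atTop

end

namespace CWC

noncomputable def avg (f : ℕ → ℝ) (N : ℕ) : ℝ := (∑ n ∈ Finset.range N, |f n|) / N

lemma avg_nonneg (f : ℕ → ℝ) (N : ℕ) : 0 ≤ avg f N :=
  div_nonneg (Finset.sum_nonneg fun n _ => abs_nonneg _) (Nat.cast_nonneg N)

lemma besic_eq (f : ℕ → ℝ) : besic f = Filter.limsup (avg f) atTop := rfl

lemma besic_eq_zero_of_not_bddAbove {f : ℕ → ℝ}
    (h : ¬ BddAbove (Set.range (avg f))) : besic f = 0 := by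
  rw [besic_eq, Filter.limsup_eq]
  convert Real.sInf_empty using 2
  · rfl
  rw [Set.eq_empty_iff_forall_notMem]
  intro a ha
  exact h ((Filter.IsBoundedUnder.bddAbove_range (⟨a, by simpa using ha⟩ :
    Filter.IsBoundedUnder (· ≤ ·) atTop (avg f))))

lemma besic_nonneg (f : ℕ → ℝ) : 0 ≤ besic f := by
  by_cases h : BddAbove (Set.range (avg f))
  · obtain ⟨c, hc⟩ := h
    exact Filter.le_limsup_of_frequently_le (Filter.Frequently.of_forall (avg_nonneg f))
      (Filter.isBoundedUnder_of ⟨c, fun N => hc ⟨N, rfl⟩⟩)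
  · rw [besic_eq_zero_of_not_bddAbove h]

lemma besic_le_of_eventually {f : ℕ → ℝ} {c : ℝ} (h : ∀ᶠ N in atTop, avg f N ≤ c) :
    besic f ≤ c :=
  Filter.limsup_le_of_le (Filter.isCoboundedUnder_le_of_le atTop (fun N => avg_nonneg f N)) h

lemma eventually_avg_lt {f : ℕ → ℝ} {c : ℝ} (hb : BddAbove (Set.range (avg f)))
    (h : besic f < c) : ∀ᶠ N in atTop, avg f N < c := by
  obtain ⟨b, hbb⟩ := hb
  exact Filter.eventually_lt_of_limsup_lt h (Filter.isBoundedUnder_of ⟨b, fun N => hbb ⟨N, rfl⟩⟩)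

lemma abs_sub_le_sum_Ico (u : ℕ → ℝ) {a b : ℕ} (hab : a ≤ b) :
    |u b - u a| ≤ ∑ p ∈ Finset.Ico a b, |u (p + 1) - u p| := by
  induction b, hab using Nat.le_induction with
  | base => simp
  | succ b hab ih =>
      rw [Finset.sum_Ico_succ_top hab]
      calc |u (b + 1) - u a| = |(u b - u a) + (u (b + 1) - u b)| := by ring_nf
        _ ≤ |u b - u a| + |u (b + 1) - u b| := abs_add_le _ _
        _ ≤ _ := by linarith

lemma sum_Ico_halfpow_le (m M : ℕ) :
    ∑ p ∈ Finset.Ico m M, ((2:ℝ)⁻¹) ^ p ≤ 2 * (2⁻¹) ^ m := by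
  rcases le_or_gt m M with h | h
  · rw [Finset.sum_Ico_eq_sum_range]
    calc ∑ i ∈ Finset.range (M - m), ((2:ℝ)⁻¹) ^ (m + i)
        = (2⁻¹) ^ m * ∑ i ∈ Finset.range (M - m), ((2:ℝ)⁻¹) ^ i := by
          rw [Finset.mul_sum]; exact Finset.sum_congr rfl fun i _ => pow_add _ _ _
      _ ≤ (2⁻¹) ^ m * 2 := by
          refine mul_le_mul_of_nonneg_left ?_ (by positivity)
          simpa [one_div] using sum_geometric_two_le (M - m)
      _ = 2 * (2⁻¹) ^ m := mul_comm _ _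
  · rw [Finset.Ico_eq_empty (by omega)]
    simp only [Finset.sum_empty]
    positivity

lemma avg_triangle (f g h : ℕ → ℝ) (N : ℕ) :
    avg (fun n => f n - h n) N ≤ avg (fun n => f n - g n) N + avg (fun n => g n - h n) N := by
  unfold avg
  rw [← add_div, div_eq_mul_inv, div_eq_mul_inv]
  refine mul_le_mul_of_nonneg_right ?_ (by positivity)
  rw [← Finset.sum_add_distrib]
  exact Finset.sum_le_sum fun n _ => abs_sub_le _ _ _

lemma avg_sub_le_add (f g : ℕ → ℝ) (N : ℕ) :
    avg (fun n => f n - g n) N ≤ avg f N + avg g N := by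
  unfold avg
  rw [← add_div, div_eq_mul_inv, div_eq_mul_inv]
  refine mul_le_mul_of_nonneg_right ?_ (by positivity)
  rw [← Finset.sum_add_distrib]
  exact Finset.sum_le_sum fun n _ => abs_sub _ _

lemma avg_le_of_avg_sub (f g : ℕ → ℝ) (N : ℕ) :
    avg f N ≤ avg (fun n => f n - g n) N + avg g N := by
  unfold avg
  rw [← add_div, div_eq_mul_inv, div_eq_mul_inv]
  refine mul_le_mul_of_nonneg_right ?_ (by positivity)
  rw [← Finset.sum_add_distrib]
  refine Finset.sum_le_sum fun n _ => ?_
  calc |f n| = |(f n - g n) + g n| := by ring_nf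
    _ ≤ |f n - g n| + |g n| := abs_add_le _ _

end CWC

namespace CWC

lemma main_construction (w : ℕ → ℕ → ℝ) (hnn : ∀ k n, 0 ≤ w k n)
    (hcauchy : ∀ ε > (0:ℝ), ∃ K, ∀ k ≥ K, ∀ l ≥ k, besic (fun n => w l n - w k n) < ε)
    (hB : ∀ M : ℕ, ∃ k ≥ M, BddAbove (Set.range (avg (w k)))) :
    ∃ v : ℕ → ℝ, (∀ n, ∃ j, v n = w j n) ∧
      Tendsto (fun k => besic (fun n => w k n - v n)) atTop (𝓝 0) := by
  classical
  have hK : ∀ j : ℕ, ∃ K, ∀ k ≥ K, ∀ l ≥ k, besic (fun n => w l n - w k n) < (2⁻¹:ℝ)^j :=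
    fun j => hcauchy _ (by positivity)
  choose K hKs using hK
  choose pick hpick_ge hpick_bdd using hB
  set kk : ℕ → ℕ := fun j => Nat.rec (motive := fun _ => ℕ) (pick (K 0))
    (fun j kj => pick (max (kj + 1) (K (j+1)))) j with hkk
  have hkk0 : kk 0 = pick (K 0) := rfl
  have hkks : ∀ j, kk (j+1) = pick (max (kk j + 1) (K (j+1))) := fun j => rfl
  have hkk_bdd : ∀ j, BddAbove (Set.range (avg (w (kk j)))) := by
    intro j; cases j with
    | zero => rw [hkk0]; exact hpick_bdd _
    | succ j => rw [hkks]; exact hpick_bdd _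
  have hkk_K : ∀ j, K j ≤ kk j := by
    intro j; cases j with
    | zero => rw [hkk0]; exact hpick_ge _
    | succ j => rw [hkks]; exact le_trans (le_max_right _ _) (hpick_ge _)
  have hkk_lt : ∀ j, kk j < kk (j+1) := by
    intro j; rw [hkks]
    exact lt_of_lt_of_le (Nat.lt_succ_self _) (le_trans (le_max_left _ _) (hpick_ge _))
  have hbdd_sub : ∀ k l : ℕ, BddAbove (Set.range (avg (w k))) →
      BddAbove (Set.range (avg (w l))) →
      BddAbove (Set.range (avg (fun n => w l n - w k n))) := by
    rintro k l ⟨c, hc⟩ ⟨d, hd⟩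
    refine ⟨d + c, ?_⟩
    rintro x ⟨N, rfl⟩
    exact le_trans (avg_sub_le_add (w l) (w k) N) (add_le_add (hd ⟨N, rfl⟩) (hc ⟨N, rfl⟩))
  have hcons : ∀ p, ∀ᶠ N in atTop,
      avg (fun n => w (kk (p+1)) n - w (kk p) n) N < (2⁻¹:ℝ)^p := by
    intro p
    refine eventually_avg_lt (hbdd_sub _ _ (hkk_bdd p) (hkk_bdd (p+1))) ?_
    exact hKs p (kk p) (hkk_K p) (kk (p+1)) (hkk_lt p).le
  have hT : ∀ p, ∃ T, ∀ N ≥ T, avg (fun n => w (kk (p+1)) n - w (kk p) n) N < (2⁻¹:ℝ)^p :=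
    fun p => eventually_atTop.mp (hcons p)
  choose T hTs using hT
  set NN : ℕ → ℕ := fun j => Nat.rec (motive := fun _ => ℕ) 0
    (fun j Nj => max (Nj + 1) ((Finset.range (j+1)).sup T)) j with hNN
  have hNN0 : NN 0 = 0 := rfl
  have hNNs : ∀ j, NN (j+1) = max (NN j + 1) ((Finset.range (j+1)).sup T) := fun j => rfl
  have hNN_lt : ∀ j, NN j < NN (j+1) := fun j => by
    rw [hNNs]; exact lt_of_lt_of_le (Nat.lt_succ_self _) (le_max_left _ _)
  have hNN_mono : StrictMono NN := strictMono_nat_of_lt_succ hNN_lt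
  have hNN_T : ∀ p, T p ≤ NN (p+1) := fun p => by
    rw [hNNs]; exact le_trans (Finset.le_sup (Finset.self_mem_range_succ p)) (le_max_right _ _)
  set J : ℕ → ℕ := fun n => Nat.findGreatest (fun j => NN j ≤ n) n with hJdef
  have hJ_le : ∀ n, NN (J n) ≤ n := by
    intro n
    exact Nat.findGreatest_spec (P := fun j => NN j ≤ n) (Nat.zero_le n)
      (show NN 0 ≤ n by rw [hNN0]; exact Nat.zero_le n)
  have hJ_ge : ∀ j n, NN j ≤ n → j ≤ J n := by
    intro j n h
    exact Nat.le_findGreatest (P := fun j => NN j ≤ n) (le_trans hNN_mono.le_apply h) h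
  have hJ_len : ∀ n, J n ≤ n := fun n => Nat.findGreatest_le n
  set v : ℕ → ℝ := fun n => w (kk (J n)) n with hv
  -- key estimate
  have key : ∀ m, ∃ Cm : ℝ, 0 ≤ Cm ∧ ∀ N : ℕ,
      ∑ n ∈ Finset.range N, |w (kk m) n - v n| ≤ Cm + 2 * (2⁻¹:ℝ)^m * N := by
    intro m
    refine ⟨∑ n ∈ Finset.range (NN m), |w (kk m) n - v n|,
      Finset.sum_nonneg fun n _ => abs_nonneg _, fun N => ?_⟩
    rcases le_or_gt N (NN m) with hNm | hNm
    · calc ∑ n ∈ Finset.range N, |w (kk m) n - v n|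
          ≤ ∑ n ∈ Finset.range (NN m), |w (kk m) n - v n| :=
            Finset.sum_le_sum_of_subset_of_nonneg (Finset.range_subset_range.2 hNm)
              (fun n _ _ => abs_nonneg _)
        _ ≤ _ := le_add_of_nonneg_right (by positivity)
    · rw [Finset.range_eq_Ico, ← Finset.sum_Ico_consecutive _ (Nat.zero_le (NN m)) hNm.le,
        ← Finset.range_eq_Ico]
      refine add_le_add le_rfl ?_
      have step1 : ∀ n ∈ Finset.Ico (NN m) N, |w (kk m) n - v n| ≤
          ∑ p ∈ Finset.Ico m N,
            (if NN (p+1) ≤ n then |w (kk (p+1)) n - w (kk p) n| else 0) := by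
        intro n hn
        rw [Finset.mem_Ico] at hn
        have hmJ : m ≤ J n := hJ_ge m n hn.1
        calc |w (kk m) n - v n| = |w (kk (J n)) n - w (kk m) n| := by
              rw [hv, abs_sub_comm]
          _ ≤ ∑ p ∈ Finset.Ico m (J n), |w (kk (p+1)) n - w (kk p) n| :=
              abs_sub_le_sum_Ico (fun p => w (kk p) n) hmJ
          _ = ∑ p ∈ Finset.Ico m (J n),
              (if NN (p+1) ≤ n then |w (kk (p+1)) n - w (kk p) n| else 0) := by
              refine (Finset.sum_congr rfl fun p hp => ?_).symm
              rw [Finset.mem_Ico] at hp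
              rw [if_pos (le_trans (hNN_mono.monotone (Nat.succ_le_of_lt hp.2)) (hJ_le n))]
          _ ≤ _ := Finset.sum_le_sum_of_subset_of_nonneg
              (Finset.Ico_subset_Ico le_rfl (lt_of_le_of_lt (hJ_len n) hn.2).le)
              (fun p _ _ => by split_ifs; exacts [abs_nonneg _, le_rfl])
      have stepC : ∀ p ∈ Finset.Ico m N, ∑ n ∈ Finset.range N,
          (if NN (p+1) ≤ n then |w (kk (p+1)) n - w (kk p) n| else 0) ≤ (2⁻¹:ℝ)^p * N := by
        intro p _
        rcases le_or_gt N (NN (p+1)) with h | h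
        · have hz : ∀ n ∈ Finset.range N,
              (if NN (p+1) ≤ n then |w (kk (p+1)) n - w (kk p) n| else 0) = 0 := by
            intro n hn
            rw [Finset.mem_range] at hn
            rw [if_neg (by omega)]
          rw [Finset.sum_congr rfl hz, Finset.sum_const_zero]
          positivity
        · have hNpos : (0:ℝ) < N := by
            have : 0 < N := lt_of_le_of_lt (Nat.zero_le _) h
            exact_mod_cast this
          have havg := hTs p N (le_trans (hNN_T p) h.le)
          unfold avg at havg
          have hsum : ∑ n ∈ Finset.range N, |w (kk (p+1)) n - w (kk p) n| ≤ (2⁻¹:ℝ)^p * N :=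
            (div_le_iff₀ hNpos).mp havg.le
          refine le_trans (Finset.sum_le_sum fun n _ => ?_) hsum
          split_ifs
          exacts [le_rfl, abs_nonneg _]
      calc ∑ n ∈ Finset.Ico (NN m) N, |w (kk m) n - v n|
          ≤ ∑ n ∈ Finset.Ico (NN m) N, ∑ p ∈ Finset.Ico m N,
            (if NN (p+1) ≤ n then |w (kk (p+1)) n - w (kk p) n| else 0) :=
            Finset.sum_le_sum step1
        _ ≤ ∑ n ∈ Finset.range N, ∑ p ∈ Finset.Ico m N,
            (if NN (p+1) ≤ n then |w (kk (p+1)) n - w (kk p) n| else 0) :=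
            Finset.sum_le_sum_of_subset_of_nonneg
              (by rw [Finset.range_eq_Ico]; exact Finset.Ico_subset_Ico (Nat.zero_le _) le_rfl)
              (fun n _ _ => Finset.sum_nonneg fun p _ => by
                split_ifs; exacts [abs_nonneg _, le_rfl])
        _ = ∑ p ∈ Finset.Ico m N, ∑ n ∈ Finset.range N,
            (if NN (p+1) ≤ n then |w (kk (p+1)) n - w (kk p) n| else 0) := Finset.sum_comm
        _ ≤ ∑ p ∈ Finset.Ico m N, (2⁻¹:ℝ)^p * N := Finset.sum_le_sum stepC
        _ = (∑ p ∈ Finset.Ico m N, (2⁻¹:ℝ)^p) * N := (Finset.sum_mul _ _ _).symm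
        _ ≤ 2 * (2⁻¹:ℝ)^m * N :=
            mul_le_mul_of_nonneg_right (sum_Ico_halfpow_le m N) (Nat.cast_nonneg N)
  -- eventual average bound
  have ev_bound : ∀ m, ∀ᶠ N in atTop, avg (fun n => w (kk m) n - v n) N ≤ 3 * (2⁻¹:ℝ)^m := by
    intro m
    obtain ⟨Cm, hCm0, hCm⟩ := key m
    have h1 : ∀ᶠ N : ℕ in atTop, Cm / N < (2⁻¹:ℝ)^m :=
      (tendsto_const_div_atTop_nhds_zero_nat Cm).eventually_lt_const (by positivity)
    filter_upwards [h1, eventually_ge_atTop 1] with N hN1 hN2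
    have hNpos : (0:ℝ) < N := by exact_mod_cast hN2
    have h2 : avg (fun n => w (kk m) n - v n) N ≤ (Cm + 2 * (2⁻¹:ℝ)^m * N) / N := by
      unfold avg
      exact (div_le_div_iff_of_pos_right hNpos).mpr (hCm N)
    refine le_trans h2 ?_
    rw [add_div, mul_div_assoc, div_self (ne_of_gt hNpos), mul_one]
    linarith
  -- bounded averages of v
  obtain ⟨D, hD⟩ := hkk_bdd 0
  obtain ⟨C0, hC00, hC0⟩ := key 0
  have hD0 : (0:ℝ) ≤ D := le_trans (avg_nonneg _ 0) (hD ⟨0, rfl⟩)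
  have hvE : ∀ N, avg v N ≤ D + C0 + 2 := by
    intro N
    rcases Nat.eq_zero_or_pos N with rfl | hNpos
    · unfold avg
      simp only [Finset.range_zero, Finset.sum_empty, Nat.cast_zero, zero_div]
      linarith
    · have hN1 : (1:ℝ) ≤ N := by exact_mod_cast hNpos
      have hNpos' : (0:ℝ) < N := by linarith
      have hw0 : ∑ n ∈ Finset.range N, |w (kk 0) n| ≤ D * N :=
        (div_le_iff₀ hNpos').mp (hD ⟨N, rfl⟩)
      have hC0N := hC0 N
      rw [pow_zero, mul_one] at hC0N
      have hsum : ∑ n ∈ Finset.range N, |v n| ≤ D * N + (C0 + 2 * N) := by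
        calc ∑ n ∈ Finset.range N, |v n|
            ≤ ∑ n ∈ Finset.range N, (|w (kk 0) n| + |w (kk 0) n - v n|) := by
              refine Finset.sum_le_sum fun n _ => ?_
              calc |v n| = |w (kk 0) n - (w (kk 0) n - v n)| := by ring_nf
                _ ≤ |w (kk 0) n| + |w (kk 0) n - v n| := abs_sub _ _
          _ = (∑ n ∈ Finset.range N, |w (kk 0) n|) +
              ∑ n ∈ Finset.range N, |w (kk 0) n - v n| := Finset.sum_add_distrib
          _ ≤ D * N + (C0 + 2 * N) := add_le_add hw0 hC0N
      unfold avg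
      rw [div_le_iff₀ hNpos']
      have hC0N' : C0 ≤ C0 * N := le_mul_of_one_le_right hC00 hN1
      nlinarith
  -- junk case
  have hjunk : ∀ k, ¬ BddAbove (Set.range (avg (w k))) →
      besic (fun n => w k n - v n) = 0 := by
    intro k hk
    refine besic_eq_zero_of_not_bddAbove ?_
    rintro ⟨c, hc⟩
    refine hk ⟨c + (D + C0 + 2), ?_⟩
    rintro x ⟨N, rfl⟩
    calc avg (w k) N ≤ avg (fun n => w k n - v n) N + avg v N := avg_le_of_avg_sub (w k) v N
      _ ≤ c + (D + C0 + 2) := add_le_add (hc ⟨N, rfl⟩) (hvE N)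
  -- main bound
  have hmain : ∀ m k, kk m ≤ k → besic (fun n => w k n - v n) ≤ 4 * (2⁻¹:ℝ)^m := by
    intro m k hkm
    by_cases hk : BddAbove (Set.range (avg (w k)))
    · have h1 : besic (fun n => w k n - w (kk m) n) < (2⁻¹:ℝ)^m :=
        hKs m (kk m) (hkk_K m) k hkm
      have h2 : ∀ᶠ N in atTop, avg (fun n => w k n - w (kk m) n) N < (2⁻¹:ℝ)^m :=
        eventually_avg_lt (hbdd_sub _ _ (hkk_bdd m) hk) h1
      refine besic_le_of_eventually ?_
      filter_upwards [h2, ev_bound m] with N hN1 hN2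
      calc avg (fun n => w k n - v n) N
          ≤ avg (fun n => w k n - w (kk m) n) N + avg (fun n => w (kk m) n - v n) N :=
            avg_triangle _ _ _ N
        _ ≤ (2⁻¹:ℝ)^m + 3 * (2⁻¹:ℝ)^m := add_le_add hN1.le hN2
        _ = 4 * (2⁻¹:ℝ)^m := by ring
    · rw [hjunk k hk]; positivity
  refine ⟨v, fun n => ⟨kk (J n), rfl⟩, ?_⟩
  rw [NormedAddCommGroup.tendsto_nhds_zero]
  intro ε hε
  obtain ⟨m, hm⟩ : ∃ m : ℕ, 4 * (2⁻¹:ℝ)^m < ε := by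
    obtain ⟨m, hm⟩ := exists_pow_lt_of_lt_one (show (0:ℝ) < ε/4 by linarith)
      (show (2⁻¹:ℝ) < 1 by norm_num)
    exact ⟨m, by linarith⟩
  filter_upwards [eventually_ge_atTop (kk m)] with k hk
  rw [Real.norm_eq_abs, abs_of_nonneg (besic_nonneg _)]
  exact lt_of_le_of_lt (hmain m k hk) hm

end CWC

/-- a Cauchy sequence of nonnegative sequences (weights) in the seminorm `‖·‖₁`
converges in `‖·‖₁` to a nonnegative sequence; a uniform bound can be preserved. -/

theorem cauchy_weights_converge (w : ℕ → ℕ → ℝ) (hnn : ∀ k n, 0 ≤ w k n)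
    (hcauchy : ∀ ε > (0 : ℝ), ∃ K, ∀ k ≥ K, ∀ l ≥ k,
      besic (fun n => w l n - w k n) < ε) :
    (∃ v : ℕ → ℝ, (∀ n, 0 ≤ v n) ∧
        Tendsto (fun k => besic (fun n => w k n - v n)) atTop (𝓝 0)) ∧
    ∀ C : ℝ, (∀ k n, w k n ≤ C) →
      ∃ v : ℕ → ℝ, (∀ n, 0 ≤ v n) ∧
        Tendsto (fun k => besic (fun n => w k n - v n)) atTop (𝓝 0) ∧
        ∀ n, v n ≤ C := by
  classical
  constructor
  · by_cases hB : ∀ M : ℕ, ∃ k ≥ M, BddAbove (Set.range (CWC.avg (w k)))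
    · obtain ⟨v, hvform, hvtend⟩ := CWC.main_construction w hnn hcauchy hB
      exact ⟨v, fun n => by obtain ⟨j, hj⟩ := hvform n; rw [hj]; exact hnn j n, hvtend⟩
    · push_neg at hB
      obtain ⟨M, hM⟩ := hB
      refine ⟨fun _ => 0, fun n => le_rfl, ?_⟩
      have hz : ∀ k ≥ M, besic (fun n => w k n - 0) = 0 := by
        intro k hk
        have he : CWC.avg (fun n => w k n - 0) = CWC.avg (w k) := by
          funext N; unfold CWC.avg; simp
        refine CWC.besic_eq_zero_of_not_bddAbove ?_
        rw [he]
        exact hM k hk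
      refine tendsto_const_nhds.congr' ?_
      filter_upwards [eventually_ge_atTop M] with k hk
      exact (hz k hk).symm
  · intro C hC
    have hB : ∀ M : ℕ, ∃ k ≥ M, BddAbove (Set.range (CWC.avg (w k))) := by
      intro M
      refine ⟨M, le_rfl, ⟨max C 0, ?_⟩⟩
      rintro x ⟨N, rfl⟩
      rcases Nat.eq_zero_or_pos N with rfl | hN
      · unfold CWC.avg
        simp only [Finset.range_zero, Finset.sum_empty, Nat.cast_zero, zero_div]
        exact le_max_right C 0
      · have hN' : (0:ℝ) < N := by exact_mod_cast hN
        unfold CWC.avg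
        rw [div_le_iff₀ hN']
        calc ∑ n ∈ Finset.range N, |w M n| ≤ ∑ n ∈ Finset.range N, max C 0 :=
              Finset.sum_le_sum fun n _ => by
                rw [abs_of_nonneg (hnn M n)]
                exact le_trans (hC M n) (le_max_left _ _)
          _ = max C 0 * N := by
              rw [Finset.sum_const, Finset.card_range, nsmul_eq_mul, mul_comm]
    obtain ⟨v, hvform, hvtend⟩ := CWC.main_construction w hnn hcauchy hB
    refine ⟨v, fun n => ?_, hvtend, fun n => ?_⟩
    · obtain ⟨j, hj⟩ := hvform n; rw [hj]; exact hnn j n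
    · obtain ⟨j, hj⟩ := hvform n; rw [hj]; exact hC j n
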